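/- Let P ⊆ ℝ^N be a closed, convex and CP admissible set. Then the conic hull of P satisfies cone(P) = { λ x : λ ≥ 0, x ∈ P }, and cone(P) is a closed, convex and CP admissible cone. -/

import Mathlib

open Set

/-- `P` is coordinate projection (CP) admissible: for every `x ∈ P` and every
index set `J ⊆ supp(x)`, the coordinate projection `π_J(x)` belongs to `P`. -/
def CPAdmissible {N : ℕ} (P : Set (Fin N → ℝ)) : Prop :=
  ∀ x ∈ P, ∀ J : Set (Fin N), J ⊆ {i | x i ≠ 0} → J.indicator x ∈ P

/-- The conic hull of `P`: all nonnegative combinations of finitely many vectors of `P`. -/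
def coneHull {N : ℕ} (P : Set (Fin N → ℝ)) : Set (Fin N → ℝ) :=
  {y | ∃ (n : ℕ) (c : Fin n → ℝ) (x : Fin n → (Fin N → ℝ)),
    (∀ i, 0 ≤ c i) ∧ (∀ i, x i ∈ P) ∧ y = ∑ i, c i • x i}

/-- For a closed, convex, CP admissible set `P`, `cone(P) = {λ x : λ ≥ 0, x ∈ P}`,
and `cone(P)` is a closed, convex, CP admissible cone. -/
theorem stmt_11 {N : ℕ} (P : Set (Fin N → ℝ)) (hne : P.Nonempty)
    (hcl : IsClosed P) (hconv : Convex ℝ P) (hcp : CPAdmissible P) :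
    coneHull P = {y : Fin N → ℝ | ∃ (t : ℝ) (x : Fin N → ℝ), 0 ≤ t ∧ x ∈ P ∧ y = t • x} ∧
    IsClosed (coneHull P) ∧ Convex ℝ (coneHull P) ∧ CPAdmissible (coneHull P) ∧
    (0 : Fin N → ℝ) ∈ coneHull P ∧
    (∀ x ∈ coneHull P, ∀ t : ℝ, 0 ≤ t → t • x ∈ coneHull P) := by
  classical
  obtain ⟨x₀, hx₀⟩ := hne
  have h0P : (0 : Fin N → ℝ) ∈ P := by
    have := hcp x₀ hx₀ ∅ (empty_subset _)
    simp only [Set.indicator_empty] at this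
    exact this
  set Q : Set (Fin N → ℝ) :=
      {y : Fin N → ℝ | ∃ (t : ℝ) (x : Fin N → ℝ), 0 ≤ t ∧ x ∈ P ∧ y = t • x} with hQdef
  have h0Q : (0 : Fin N → ℝ) ∈ Q := ⟨0, x₀, le_refl 0, hx₀, (zero_smul ℝ x₀).symm⟩
  have haddQ : ∀ a ∈ Q, ∀ b ∈ Q, a + b ∈ Q := by
    rintro a ⟨t, x, ht, hx, rfl⟩ b ⟨s, z, hs, hz, rfl⟩
    rcases eq_or_lt_of_le (add_nonneg ht hs) with h | h
    · have ht0 : t = 0 := by linarith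
      have hs0 : s = 0 := by linarith
      subst ht0; subst hs0
      simpa using h0Q
    · have hts : t + s ≠ 0 := ne_of_gt h
      refine ⟨t + s, (t / (t + s)) • x + (s / (t + s)) • z, le_of_lt h,
        hconv hx hz (by positivity) (by positivity) (by field_simp), ?_⟩
      rw [smul_add, smul_smul, smul_smul]
      rw [mul_div_cancel₀ _ hts, mul_div_cancel₀ _ hts]
  have hsmulQ : ∀ y ∈ Q, ∀ t : ℝ, 0 ≤ t → t • y ∈ Q := by
    rintro y ⟨s, x, hs, hx, rfl⟩ t ht
    exact ⟨t * s, x, mul_nonneg ht hs, hx, smul_smul t s x⟩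
  have hQsub : Q ⊆ coneHull P := by
    rintro y ⟨t, x, ht, hx, rfl⟩
    exact ⟨1, fun _ => t, fun _ => x, fun _ => ht, fun _ => hx, by simp⟩
  have hsubQ : coneHull P ⊆ Q := by
    rintro y ⟨n, c, x, hc, hx, rfl⟩
    refine Finset.sum_induction _ (· ∈ Q) (fun a b ha hb => haddQ a ha b hb) h0Q ?_
    intro i _
    exact ⟨c i, x i, hc i, hx i, rfl⟩
  have hEq : coneHull P = Q := Subset.antisymm hsubQ hQsub
  -- closure of Q is contained in coneHull P
  have hsingle : ∀ y ∈ closure Q, ∀ i : Fin N,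
      ∃ (c : ℝ) (w : Fin N → ℝ), 0 ≤ c ∧ w ∈ P ∧ Pi.single i (y i) = c • w := by
    intro y hy i
    by_cases hyi : y i = 0
    · exact ⟨0, x₀, le_refl 0, hx₀, by simp [hyi]⟩
    · obtain ⟨u, hu, hulim⟩ := mem_closure_iff_seq_limit.1 hy
      have hlim : Filter.Tendsto (fun n => u n i) Filter.atTop (nhds (y i)) :=
        ((continuous_apply i).continuousAt.tendsto).comp hulim
      have hopen : IsOpen {z : ℝ | 0 < z * y i} :=
        isOpen_lt continuous_const (continuous_id.mul continuous_const)
      have hmem : y i ∈ {z : ℝ | 0 < z * y i} := mul_self_pos.2 hyi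
      have hev : ∀ᶠ n in Filter.atTop, 0 < u n i * y i :=
        hlim.eventually (hopen.eventually_mem hmem)
      obtain ⟨n, hn⟩ := hev.exists
      obtain ⟨t, x, ht, hxP, hux⟩ := hu n
      have hui : u n i = t * x i := by rw [hux]; simp
      rw [hui] at hn
      have htpos : 0 < t := by
        rcases lt_or_eq_of_le ht with h | h
        · exact h
        · exfalso; rw [← h] at hn; simp at hn
      have hxy : 0 < x i * y i := by
        by_contra hle
        push_neg at hle
        nlinarith
      have hxi : x i ≠ 0 := by
        intro h0; rw [h0] at hxy; simp at hxy
      have hcpos : 0 < y i / x i := by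
        rcases mul_pos_iff.1 hxy with ⟨h1, h2⟩ | ⟨h1, h2⟩
        · exact div_pos h2 h1
        · exact div_pos_of_neg_of_neg h2 h1
      refine ⟨y i / x i, ({i} : Set (Fin N)).indicator x, le_of_lt hcpos,
        hcp x hxP {i} (by simpa using hxi), ?_⟩
      funext j
      by_cases hj : j = i
      · subst hj
        simp [Set.indicator_apply, div_mul_cancel₀ _ hxi]
      · simp [Pi.single_apply, hj, Set.indicator_apply, hj]
  have hclosQ : closure Q ⊆ Q := by
    intro y hy
    choose c w hc hw hcw using hsingle y hy
    refine hsubQ ⟨N, c, w, hc, hw, ?_⟩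
    calc y = ∑ i, Pi.single i (y i) := (Finset.univ_sum_single y).symm
      _ = ∑ i, c i • w i := Finset.sum_congr rfl fun i _ => hcw i
  have hclosed : IsClosed Q := isClosed_of_closure_subset hclosQ
  have hconvQ : Convex ℝ Q := by
    intro x hx y hy a b ha hb _
    exact haddQ _ (hsmulQ x hx a ha) _ (hsmulQ y hy b hb)
  have hcpQ : CPAdmissible Q := by
    rintro y ⟨t, x, ht, hx, rfl⟩ J hJ
    rcases eq_or_lt_of_le ht with h | h
    · have : J = ∅ := by
        rw [eq_empty_iff_forall_notMem]
        intro i hi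
        have := hJ hi
        simp only [mem_setOf_eq, ← h, zero_smul] at this
        exact this rfl
      subst this
      simp only [Set.indicator_empty]
      exact h0Q
    · have hJ' : J ⊆ {i | x i ≠ 0} := by
        intro i hi
        have := hJ hi
        simp only [mem_setOf_eq, Pi.smul_apply, smul_eq_mul] at this
        intro h0
        exact this (by rw [h0, mul_zero])
      refine ⟨t, J.indicator x, ht, hcp x hx J hJ', ?_⟩
      funext j
      by_cases hj : j ∈ J <;> simp [Set.indicator_apply, hj]
  rw [hEq]
  exact ⟨rfl, hclosed, hconvQ, hcpQ, h0Q, hsmulQ⟩
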